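/- If idempotents lift modulo nil(R), and x + nil(R) and y + nil(R) are adjacent in the nil clean graph of R/nil(R), then every element of the coset x + nil(R) is adjacent to every element of the coset y + nil(R) in the nil clean graph of R. -/

import Mathlib

def IsNilClean {R : Type*} [CommRing R] (r : R) : Prop :=
  ∃ n e : R, IsNilpotent n ∧ IsIdempotentElem e ∧ r = n + e

def nilCleanGraph (R : Type*) [CommRing R] : SimpleGraph R where
  Adj x y := x ≠ y ∧ IsNilClean (x + y)
  symm := by
    refine ⟨?_⟩
    rintro x y ⟨hxy, n, e, hn, he, h⟩
    exact ⟨hxy.symm, n, e, hn, he, by rwa [add_comm]⟩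
  loopless := by refine ⟨?_⟩; rintro x ⟨h, -⟩; exact h rfl

theorem stmt1 (R : Type*) [CommRing R]
    (hlift : ∀ e : R ⧸ nilradical R, IsIdempotentElem e →
      ∃ f : R, IsIdempotentElem f ∧ Ideal.Quotient.mk (nilradical R) f = e)
    (x y : R)
    (hadj : (nilCleanGraph (R ⧸ nilradical R)).Adj
      (Ideal.Quotient.mk (nilradical R) x) (Ideal.Quotient.mk (nilradical R) y))
    (a b : R)
    (ha : Ideal.Quotient.mk (nilradical R) a = Ideal.Quotient.mk (nilradical R) x)
    (hb : Ideal.Quotient.mk (nilradical R) b = Ideal.Quotient.mk (nilradical R) y) :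
    (nilCleanGraph R).Adj a b := by
  obtain ⟨hne, n, e, hn, he, hsum⟩ := hadj
  have : IsReduced (R ⧸ nilradical R) :=
    (Ideal.isRadical_iff_quotient_reduced _).mp (Ideal.radical_isRadical (0 : Ideal R))
  have hn0 : n = 0 := hn.eq_zero
  obtain ⟨f, hf, hfe⟩ := hlift e he
  have hab : Ideal.Quotient.mk (nilradical R) (a + b - f) = 0 := by
    rw [map_sub, map_add, ha, hb, hfe, sub_eq_zero, hsum, hn0, zero_add]
  have hnil : IsNilpotent (a + b - f) := by
    rw [Ideal.Quotient.eq_zero_iff_mem] at hab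
    rwa [mem_nilradical] at hab
  refine ⟨fun h => hne ?_, a + b - f, f, hnil, hf, by ring⟩
  rw [← ha, ← hb, h]
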